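/- Let a_1, ..., a_s and λ be positive real numbers, and let N_s(λ; a_1,...,a_s) denote the number of points (x_1,...,x_s) with nonnegative integer coordinates satisfying a_1 x_1 + ... + a_s x_s ≤ λ. Then N_s(λ; a_1,...,a_s) > λ^s / (s! · a_1 ⋯ a_s). -/

import Mathlib

/-- Number of nonnegative-integer lattice points in the simplex
`a₁x₁ + ⋯ + aₛxₛ ≤ λ`. -/
noncomputable def latticeCount (s : ℕ) (a : Fin s → ℝ) (lam : ℝ) : ℕ :=
  Nat.card {v : Fin s → ℕ // ∑ i, a i * v i ≤ lam}

open Finset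

lemma coord_bound {s : ℕ} {a : Fin s → ℝ} (ha : ∀ i, 0 < a i) {lam : ℝ}
    {v : Fin s → ℕ} (hv : ∑ i, a i * v i ≤ lam) (i : Fin s) :
    (v i : ℝ) ≤ lam / a i := by
  rw [le_div_iff₀ (ha i), mul_comm]
  calc a i * (v i : ℝ) ≤ ∑ j, a j * (v j : ℝ) :=
        Finset.single_le_sum (fun j _ => mul_nonneg (ha j).le (v j).cast_nonneg : ∀ j ∈ univ, 0 ≤ a j * (v j : ℝ)) (mem_univ i)
    _ ≤ lam := hv

lemma lattice_finite (s : ℕ) (a : Fin s → ℝ) (ha : ∀ i, 0 < a i) (lam : ℝ) :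
    Finite {v : Fin s → ℕ // ∑ i, a i * v i ≤ lam} := by
  apply Finite.of_injective
    (fun v => (fun i => (⟨v.1 i, Nat.lt_succ_of_le (Nat.le_floor (coord_bound ha v.2 i))⟩ :
      Fin (⌊lam / a i⌋₊ + 1))))
  intro v w h
  ext i
  exact congrArg Fin.val (congrFun h i)

lemma lattice_rec (n : ℕ) (a : Fin (n+1) → ℝ) (ha : ∀ i, 0 < a i) (lam : ℝ) (hlam : 0 ≤ lam) :
    latticeCount (n+1) a lam =
      ∑ k ∈ Finset.range (⌊lam / a 0⌋₊ + 1),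
        latticeCount n (fun i => a i.succ) (lam - a 0 * k) := by
  classical
  set m := ⌊lam / a 0⌋₊ with hm
  have hsum : ∀ v : Fin (n+1) → ℕ,
      ∑ i, a i * v i = a 0 * v 0 + ∑ i : Fin n, a i.succ * v i.succ := by
    intro v; rw [Fin.sum_univ_succ]
  have e : {v : Fin (n+1) → ℕ // ∑ i, a i * v i ≤ lam} ≃
      Σ k : Fin (m+1), {w : Fin n → ℕ // ∑ i, (fun i => a (Fin.succ i)) i * w i ≤ lam - a 0 * k} := by
    refine ⟨fun v => ⟨⟨v.1 0, Nat.lt_succ_of_le (Nat.le_floor (coord_bound ha v.2 0))⟩,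
      ⟨fun i => v.1 i.succ, ?_⟩⟩, fun p => ⟨Fin.cons p.1.1 p.2.1, ?_⟩, ?_, ?_⟩
    · have := v.2
      rw [hsum] at this
      simpa using le_sub_iff_add_le'.mpr this
    · rw [hsum]
      simp only [Fin.cons_zero, Fin.cons_succ]
      have := p.2.2
      simpa using add_le_of_le_sub_left (by exact this)
    · intro v
      ext i
      refine Fin.cases ?_ ?_ i
      · simp
      · intro j; simp
    · intro p
      refine Sigma.ext ?_ ?_
      · simp
      · simp
        rfl
  have h1 := lattice_finite (n+1) a ha lam
  have h2 : ∀ k : Fin (m+1),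
      Finite {w : Fin n → ℕ // ∑ i, (fun i => a (Fin.succ i)) i * w i ≤ lam - a 0 * k} :=
    fun k => lattice_finite n _ (fun i => ha i.succ) _
  rw [latticeCount, Nat.card_congr e]
  haveI := fun k : Fin (m+1) => Fintype.ofFinite
    {w : Fin n → ℕ // ∑ i, (fun i => a (Fin.succ i)) i * w i ≤ lam - a 0 * k}
  rw [Nat.card_eq_fintype_card, Fintype.card_sigma]
  have hc : ∀ k : Fin (m+1),
      Fintype.card {w : Fin n → ℕ // ∑ i, (fun i => a (Fin.succ i)) i * w i ≤ lam - a 0 * k} =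
        latticeCount n (fun i => a i.succ) (lam - a 0 * (k : ℕ)) :=
    fun k => (Nat.card_eq_fintype_card).symm
  simp_rw [hc]
  exact Fin.sum_univ_eq_sum_range (fun k => latticeCount n (fun i => a i.succ) (lam - a 0 * k)) (m+1)

lemma pow_sub_pow_le' {x y : ℝ} (hy : 0 ≤ y) (hxy : y ≤ x) (n : ℕ) :
    x ^ (n+1) - y ^ (n+1) ≤ (n+1) * x ^ n * (x - y) := by
  have hx : 0 ≤ x := hy.trans hxy
  rw [← geom_sum₂_mul x y (n+1)]
  apply mul_le_mul_of_nonneg_right _ (sub_nonneg.2 hxy)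
  calc ∑ i ∈ range (n+1), x ^ i * y ^ (n + 1 - 1 - i)
      ≤ ∑ _i ∈ range (n+1), x ^ n := by
        apply sum_le_sum
        intro i hi
        have hi' : i ≤ n := Nat.lt_succ_iff.mp (mem_range.mp hi)
        calc x ^ i * y ^ (n + 1 - 1 - i) ≤ x ^ i * x ^ (n - i) := by
              simp only [Nat.add_sub_cancel]
              exact mul_le_mul_of_nonneg_left (pow_le_pow_left₀ hy hxy _) (pow_nonneg hx i)
          _ = x ^ n := by rw [← pow_add, Nat.add_sub_cancel' hi']
    _ = (n+1) * x ^ n := by simp [mul_comm]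

lemma key_f_sum (n : ℕ) (a0 lam : ℝ) (ha : 0 < a0) (hlam : 0 ≤ lam) :
    ∑ k ∈ range (⌊lam / a0⌋₊ + 1),
      ((max (lam - a0 * k) 0) ^ (n+1) - (max (lam - a0 * (k+1 : ℕ)) 0) ^ (n+1)) / ((n+1) * a0)
      = lam ^ (n+1) / ((n+1) * a0) := by
  rw [← Finset.sum_div]
  congr 1
  have h := Finset.sum_range_sub' (fun k : ℕ => (max (lam - a0 * k) 0) ^ (n+1)) (⌊lam / a0⌋₊ + 1)
  rw [h]
  have h1 : max (lam - a0 * (0:ℕ)) 0 = lam := by simp [hlam]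
  have h2 : lam - a0 * ((⌊lam / a0⌋₊ + 1 : ℕ) : ℝ) ≤ 0 := by
    have := Nat.lt_floor_add_one (lam / a0)
    rw [div_lt_iff₀ ha] at this
    push_cast
    linarith [this]
  rw [h1, max_eq_right h2]
  simp

lemma key_term_le (n : ℕ) (a0 lam : ℝ) (ha : 0 < a0) {k : ℕ} (hk : k ≤ ⌊lam / a0⌋₊)
    (hlam : 0 ≤ lam) :
    ((max (lam - a0 * k) 0) ^ (n+1) - (max (lam - a0 * (k+1 : ℕ)) 0) ^ (n+1)) / ((n+1) * a0)
      ≤ (lam - a0 * k) ^ n := by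
  have hx : 0 ≤ lam - a0 * k := by
    have hk' : (k : ℝ) ≤ lam / a0 :=
      le_trans (Nat.cast_le.mpr hk) (Nat.floor_le (by positivity))
    rw [le_div_iff₀ ha] at hk'
    linarith
  set x := lam - a0 * k with hxdef
  set y := max (lam - a0 * (k+1 : ℕ)) 0 with hydef
  have hy0 : 0 ≤ y := le_max_right _ _
  have hyx : y ≤ x := max_le (by push_cast; nlinarith) hx
  have hxy : x - y ≤ a0 := by
    rcases le_total (lam - a0 * (k+1 : ℕ)) 0 with h | h
    · rw [hydef, max_eq_right h]
      push_cast at h ⊢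
      nlinarith
    · rw [hydef, max_eq_left h]
      push_cast
      ring_nf
      nlinarith
  rw [max_eq_left hx, div_le_iff₀ (by positivity)]
  have h1 := pow_sub_pow_le' hy0 hyx n
  have h2 : ((n:ℝ)+1) * x ^ n * (x - y) ≤ ((n:ℝ)+1) * x ^ n * a0 :=
    mul_le_mul_of_nonneg_left hxy (by positivity)
  push_cast
  nlinarith [h1, h2]

lemma key_sum_le (n : ℕ) (a0 lam : ℝ) (ha : 0 < a0) (hlam : 0 ≤ lam) :
    lam ^ (n+1) / ((n+1) * a0) ≤ ∑ k ∈ range (⌊lam / a0⌋₊ + 1), (lam - a0 * k) ^ n := by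
  rw [← key_f_sum n a0 lam ha hlam]
  exact sum_le_sum fun k hk => key_term_le n a0 lam ha (Nat.lt_succ_iff.mp (mem_range.mp hk)) hlam

lemma key_sum_lt (n : ℕ) (a0 lam : ℝ) (ha : 0 < a0) (hlam : 0 < lam) :
    lam ^ (n+1) / ((n+1) * a0) < ∑ k ∈ range (⌊lam / a0⌋₊ + 1), (lam - a0 * k) ^ n := by
  rw [← key_f_sum n a0 lam ha hlam.le]
  set m := ⌊lam / a0⌋₊ with hm
  have hbm : 0 ≤ lam - a0 * m := by
    have hk' : (m : ℝ) ≤ lam / a0 := Nat.floor_le (by positivity)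
    rw [le_div_iff₀ ha] at hk'
    linarith
  have hbma : lam - a0 * m < a0 := by
    have := Nat.lt_floor_add_one (lam / a0)
    rw [div_lt_iff₀ ha] at this
    rw [← hm] at this
    linarith
  apply Finset.sum_lt_sum
    (fun k hk => key_term_le n a0 lam ha (Nat.lt_succ_iff.mp (mem_range.mp hk)) hlam.le)
  have hmax0 : max (lam - a0 * ((m+1 : ℕ) : ℝ)) 0 = 0 := by
    apply max_eq_right
    push_cast
    linarith
  rcases lt_or_eq_of_le hbm with hpos | hzero
  · -- witness k = m
    refine ⟨m, self_mem_range_succ m, ?_⟩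
    rw [hmax0, max_eq_left hbm]
    rw [div_lt_iff₀ (by positivity)]
    have h1 : (0:ℝ) < (lam - a0 * m) ^ n := pow_pos hpos n
    have h2 : (lam - a0 * m) ^ (n+1) = (lam - a0 * m) ^ n * (lam - a0 * m) := pow_succ _ _
    set x := lam - a0 * (m:ℝ) with hxd
    have h0 : (0:ℝ) ^ (n+1) = 0 := zero_pow (by omega)
    have h4 : x ^ n * x < x ^ n * a0 := mul_lt_mul_of_pos_left hbma h1
    have h5 : x ^ n * a0 ≤ x ^ n * (((n:ℝ)+1) * a0) := by
      apply mul_le_mul_of_nonneg_left _ h1.le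
      nlinarith [Nat.cast_nonneg (α := ℝ) n, ha]
    push_cast
    linarith [h0, h2, h4, h5]
  · -- lam = a0 * m
    rcases Nat.eq_zero_or_pos n with rfl | hn
    · -- n = 0 : witness m, LHS = 0 < 1
      refine ⟨m, self_mem_range_succ m, ?_⟩
      rw [hmax0, ← hzero]
      simp
    · -- n ≥ 1 : witness m - 1
      have hm1 : 1 ≤ m := by
        rcases Nat.eq_zero_or_pos m with h | h
        · exfalso
          rw [h] at hzero
          push_cast at hzero
          linarith
        · exact h
      refine ⟨m - 1, mem_range.mpr (by omega), ?_⟩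
      have hcast : ((m - 1 : ℕ) : ℝ) = (m : ℝ) - 1 := by
        push_cast [hm1]; ring
      have hsucc : (m - 1 : ℕ) + 1 = m := by omega
      have hx : lam - a0 * ((m - 1 : ℕ) : ℝ) = a0 := by
        rw [hcast]; nlinarith
      rw [hsucc, hx, ← hzero]
      have : max (0:ℝ) 0 = 0 := by simp
      rw [this, max_eq_left ha.le]
      have hpow : (0:ℝ) < a0 ^ n := pow_pos ha n
      rw [div_lt_iff₀ (by positivity)]
      have h2 : a0 ^ (n+1) = a0 ^ n * a0 := pow_succ _ _
      have h3 : (1:ℝ) < (n:ℝ) + 1 := by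
        have : (1:ℝ) ≤ (n:ℝ) := by exact_mod_cast hn
        linarith
      have h0 : (0:ℝ) ^ (n+1) = 0 := zero_pow (by omega)
      have h4 : a0 ^ n * a0 < a0 ^ n * (((n:ℝ)+1) * a0) := by
        apply mul_lt_mul_of_pos_left _ hpow
        nlinarith
      linarith [h0, h2, h4]

lemma lattice_count_zero (a : Fin 0 → ℝ) (lam : ℝ) (hlam : 0 ≤ lam) :
    latticeCount 0 a lam = 1 := by
  rw [latticeCount]
  rw [Nat.card_eq_one_iff_unique]
  constructor
  · exact ⟨fun v w => Subtype.ext (funext fun i => i.elim0)⟩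
  · exact ⟨⟨fun _ => 0, by simpa using hlam⟩⟩

lemma lattice_ge (s : ℕ) : ∀ (a : Fin s → ℝ), (∀ i, 0 < a i) → ∀ lam : ℝ, 0 ≤ lam →
    lam ^ s / (s.factorial * ∏ i, a i) ≤ (latticeCount s a lam : ℝ) := by
  induction s with
  | zero =>
    intro a ha lam hlam
    rw [lattice_count_zero a lam hlam]
    simp
  | succ n ih =>
    intro a ha lam hlam
    have ha0 := ha 0
    have hP : (0:ℝ) < ∏ i : Fin n, a i.succ := Finset.prod_pos fun i _ => ha i.succ
    have hF : (0:ℝ) < (n.factorial : ℝ) := by exact_mod_cast n.factorial_pos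
    rw [lattice_rec n a ha lam hlam]
    have hstep : ∀ k ∈ range (⌊lam / a 0⌋₊ + 1),
        (lam - a 0 * k) ^ n / (n.factorial * ∏ i : Fin n, a i.succ)
          ≤ (latticeCount n (fun i => a i.succ) (lam - a 0 * k) : ℝ) := by
      intro k hk
      apply ih _ (fun i => ha i.succ)
      have hk' : (k : ℝ) ≤ lam / a 0 :=
        le_trans (Nat.cast_le.mpr (Nat.lt_succ_iff.mp (mem_range.mp hk)))
          (Nat.floor_le (by positivity))
      rw [le_div_iff₀ ha0] at hk'
      linarith
    calc lam ^ (n+1) / ((n+1).factorial * ∏ i, a i)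
        = (lam ^ (n+1) / (((n:ℝ)+1) * a 0)) / (n.factorial * ∏ i : Fin n, a i.succ) := by
          rw [div_div]
          congr 1
          rw [Fin.prod_univ_succ, Nat.factorial_succ]
          push_cast
          ring
      _ ≤ (∑ k ∈ range (⌊lam / a 0⌋₊ + 1), (lam - a 0 * k) ^ n)
            / (n.factorial * ∏ i : Fin n, a i.succ) := by
          apply div_le_div_of_nonneg_right ?_ (by positivity)
          exact_mod_cast key_sum_le n (a 0) lam ha0 hlam
      _ = ∑ k ∈ range (⌊lam / a 0⌋₊ + 1),
            (lam - a 0 * k) ^ n / (n.factorial * ∏ i : Fin n, a i.succ) := Finset.sum_div _ _ _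
      _ ≤ ∑ k ∈ range (⌊lam / a 0⌋₊ + 1),
            (latticeCount n (fun i => a i.succ) (lam - a 0 * k) : ℝ) := sum_le_sum hstep
      _ = ((∑ k ∈ range (⌊lam / a 0⌋₊ + 1),
            latticeCount n (fun i => a i.succ) (lam - a 0 * k) : ℕ) : ℝ) := by push_cast; rfl

theorem stmt_2 (s : ℕ) (hs : 1 ≤ s) (a : Fin s → ℝ) (ha : ∀ i, 0 < a i)
    (lam : ℝ) (hlam : 0 < lam) :
    (latticeCount s a lam : ℝ) > lam ^ s / ((s.factorial : ℝ) * ∏ i, a i) := by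
  obtain ⟨n, rfl⟩ : ∃ n, s = n + 1 := ⟨s - 1, (Nat.succ_pred_eq_of_pos hs).symm⟩
  rw [gt_iff_lt]
  have ha0 := ha 0
  have hP : (0:ℝ) < ∏ i : Fin n, a i.succ := Finset.prod_pos fun i _ => ha i.succ
  have hF : (0:ℝ) < (n.factorial : ℝ) := by exact_mod_cast n.factorial_pos
  rw [lattice_rec n a ha lam hlam.le]
  have hstep : ∀ k ∈ range (⌊lam / a 0⌋₊ + 1),
      (lam - a 0 * k) ^ n / (n.factorial * ∏ i : Fin n, a i.succ)
        ≤ (latticeCount n (fun i => a i.succ) (lam - a 0 * k) : ℝ) := by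
    intro k hk
    apply lattice_ge n _ (fun i => ha i.succ)
    have hk' : (k : ℝ) ≤ lam / a 0 :=
      le_trans (Nat.cast_le.mpr (Nat.lt_succ_iff.mp (mem_range.mp hk)))
        (Nat.floor_le (by positivity))
    rw [le_div_iff₀ ha0] at hk'
    linarith
  calc lam ^ (n+1) / ((n+1).factorial * ∏ i, a i)
      = (lam ^ (n+1) / (((n:ℝ)+1) * a 0)) / (n.factorial * ∏ i : Fin n, a i.succ) := by
        rw [div_div]
        congr 1
        rw [Fin.prod_univ_succ, Nat.factorial_succ]
        push_cast
        ring
    _ < (∑ k ∈ range (⌊lam / a 0⌋₊ + 1), (lam - a 0 * k) ^ n)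
          / (n.factorial * ∏ i : Fin n, a i.succ) := by
        exact (div_lt_div_iff_of_pos_right (by positivity)).mpr (key_sum_lt n (a 0) lam ha0 hlam)
    _ = ∑ k ∈ range (⌊lam / a 0⌋₊ + 1),
          (lam - a 0 * k) ^ n / (n.factorial * ∏ i : Fin n, a i.succ) := Finset.sum_div _ _ _
    _ ≤ ∑ k ∈ range (⌊lam / a 0⌋₊ + 1),
          (latticeCount n (fun i => a i.succ) (lam - a 0 * k) : ℝ) := sum_le_sum hstep
    _ = ((∑ k ∈ range (⌊lam / a 0⌋₊ + 1),
          latticeCount n (fun i => a i.succ) (lam - a 0 * k) : ℕ) : ℝ) := by push_cast; rfl
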